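/- For every m ≥ 2, r ≥ 1 and n ≥ 1, one has the equality of subgroups [F,F]·K_{r,n} = [F,F]·F^{n^r} in F, where F^{n^r} denotes the subgroup generated by all (n^r)-th powers of elements of F. Consequently, the abelianization Φ_{m,r,n}/[Φ_{m,r,n}, Φ_{m,r,n}] is isomorphic to (ℤ/n^rℤ)^m. -/

import Mathlib

/-- The subgroup generated by all `n`-th powers of elements of `H`. -/
def Subgroup.nthPowers {G : Type*} [Group G] (H : Subgroup G) (n : ℕ) : Subgroup G :=
  Subgroup.closure {x | ∃ h ∈ H, h ^ n = x}

/-- The subgroups `K_{r,n}`: `K_{0,n} = F` and `K_{r+1,n} = [K_{r,n},K_{r,n}]·(K_{r,n})^n`. -/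
def Ksub (G : Type*) [Group G] (n : ℕ) : ℕ → Subgroup G
  | 0 => ⊤
  | r + 1 => ⁅Ksub G n r, Ksub G n r⁆ ⊔ (Ksub G n r).nthPowers n

lemma map_nthPowers {G G' : Type*} [Group G] [Group G'] (f : G →* G') (H : Subgroup G) (n : ℕ) :
    (H.nthPowers n).map f = (H.map f).nthPowers n := by
  unfold Subgroup.nthPowers
  rw [MonoidHom.map_closure]
  congr 1
  ext x
  constructor
  · rintro ⟨y, ⟨h, hh, rfl⟩, rfl⟩
    exact ⟨f h, ⟨h, hh, rfl⟩, (map_pow f h n).symm⟩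
  · rintro ⟨h', ⟨h, hh, rfl⟩, rfl⟩
    exact ⟨h ^ n, ⟨h, hh, rfl⟩, map_pow f h n⟩

lemma Ksub_map (G : Type*) [Group G] (n r : ℕ) (φ : G ≃* G) :
    (Ksub G n r).map φ.toMonoidHom = Ksub G n r := by
  induction r with
  | zero => simpa [Ksub] using Subgroup.map_top_of_surjective _ φ.surjective
  | succ r ih =>
    show (⁅Ksub G n r, Ksub G n r⁆ ⊔ (Ksub G n r).nthPowers n).map φ.toMonoidHom = _
    rw [Subgroup.map_sup, Subgroup.map_commutator, map_nthPowers, ih]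
    rfl

instance Ksub_characteristic (G : Type*) [Group G] (n r : ℕ) : (Ksub G n r).Characteristic :=
  Subgroup.characteristic_iff_map_eq.mpr fun φ => Ksub_map G n r φ


lemma derivedSeries_le_Ksub (G : Type*) [Group G] (n r : ℕ) :
    derivedSeries G r ≤ Ksub G n r := by
  induction r with
  | zero => simp [Ksub]
  | succ r ih =>
    calc derivedSeries G (r + 1) = ⁅derivedSeries G r, derivedSeries G r⁆ := rfl
    _ ≤ ⁅Ksub G n r, Ksub G n r⁆ := Subgroup.commutator_mono ih ih
    _ ≤ _ := le_sup_left

open scoped commutatorElement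

section Comm

variable {A : Type*} [Group A]

lemma mem_nthPowers_top (hA : ∀ a b : A, a * b = b * a) (a : ℕ) (x : A) :
    x ∈ (⊤ : Subgroup A).nthPowers a ↔ ∃ g : A, g ^ a = x := by
  let S : Subgroup A :=
    { carrier := {x | ∃ g : A, g ^ a = x}
      one_mem' := ⟨1, one_pow a⟩
      mul_mem' := by
        rintro x y ⟨g, rfl⟩ ⟨h, rfl⟩
        exact ⟨g * h, Commute.mul_pow (hA g h) a⟩
      inv_mem' := by rintro x ⟨g, rfl⟩; exact ⟨g⁻¹, inv_pow g a⟩ }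
  have : (⊤ : Subgroup A).nthPowers a = S := by
    apply le_antisymm
    · exact (Subgroup.closure_le S).2 (by rintro x ⟨h, -, rfl⟩; exact ⟨h, rfl⟩)
    · rintro x ⟨g, rfl⟩
      exact Subgroup.subset_closure ⟨g, trivial, rfl⟩
  rw [this]; rfl

lemma nthPowers_top_one : (⊤ : Subgroup A).nthPowers 1 = ⊤ :=
  le_antisymm le_top fun x _ => Subgroup.subset_closure ⟨x, trivial, pow_one x⟩

lemma nthPowers_nthPowers (hA : ∀ a b : A, a * b = b * a) (a b : ℕ) :
    ((⊤ : Subgroup A).nthPowers a).nthPowers b = (⊤ : Subgroup A).nthPowers (a * b) := by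
  apply le_antisymm
  · apply (Subgroup.closure_le _).2
    rintro x ⟨h, hh, rfl⟩
    obtain ⟨g, rfl⟩ := (mem_nthPowers_top hA a h).1 hh
    exact (mem_nthPowers_top hA (a * b) _).2 ⟨g, pow_mul g a b⟩
  · apply (Subgroup.closure_le _).2
    rintro x ⟨g, -, rfl⟩
    refine Subgroup.subset_closure ⟨g ^ a, Subgroup.subset_closure ⟨g, trivial, rfl⟩, ?_⟩
    rw [← pow_mul]

lemma commutator_subgroup_eq_bot (hA : ∀ a b : A, a * b = b * a) (H K : Subgroup A) :
    ⁅H, K⁆ = ⊥ := by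
  rw [eq_bot_iff, Subgroup.commutator_le]
  intro g _ h _
  simp only [Subgroup.mem_bot]
  rw [commutatorElement_def, hA g h]
  group

lemma map_Ksub {G : Type*} [Group G] (π : G →* A) (hπ : Function.Surjective π)
    (hA : ∀ a b : A, a * b = b * a) (n r : ℕ) :
    (Ksub G n r).map π = (⊤ : Subgroup A).nthPowers (n ^ r) := by
  induction r with
  | zero =>
    show (⊤ : Subgroup G).map π = _
    rw [Subgroup.map_top_of_surjective _ hπ, pow_zero, nthPowers_top_one]
  | succ r ih =>
    show (⁅Ksub G n r, Ksub G n r⁆ ⊔ (Ksub G n r).nthPowers n).map π = _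
    rw [Subgroup.map_sup, Subgroup.map_commutator, map_nthPowers, ih,
      commutator_subgroup_eq_bot hA, bot_sup_eq, nthPowers_nthPowers hA, ← pow_succ]

end Comm

lemma nthPowers_top_char (G : Type*) [Group G] (N : ℕ) :
    ((⊤ : Subgroup G).nthPowers N).Characteristic :=
  Subgroup.characteristic_iff_map_eq.mpr fun φ => by
    rw [map_nthPowers, Subgroup.map_top_of_surjective _ φ.surjective]

attribute [local instance] nthPowers_top_char

lemma part1 {G : Type*} [Group G] (n r : ℕ) :
    commutator G ⊔ Ksub G n r = commutator G ⊔ (⊤ : Subgroup G).nthPowers (n ^ r) := by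
  set C := commutator G
  let π := QuotientGroup.mk' C
  have hker : π.ker = C := QuotientGroup.ker_mk' C
  have hsurj : Function.Surjective π := QuotientGroup.mk'_surjective C
  have hA : ∀ a b : G ⧸ C, a * b = b * a := by
    intro a b
    induction a using QuotientGroup.induction_on with | H x =>
    induction b using QuotientGroup.induction_on with | H y =>
    rw [← QuotientGroup.mk_mul, ← QuotientGroup.mk_mul]
    apply (QuotientGroup.eq (s := C)).2
    have : (x * y)⁻¹ * (y * x) = ⁅y⁻¹, x⁻¹⁆ := by group
    rw [this]
    exact Subgroup.commutator_mem_commutator (Subgroup.mem_top _) (Subgroup.mem_top _)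
  have h1 : (Ksub G n r).map π = ((⊤ : Subgroup G).nthPowers (n ^ r)).map π := by
    rw [map_Ksub π hsurj hA n r, map_nthPowers, Subgroup.map_top_of_surjective _ hsurj]
  calc C ⊔ Ksub G n r = Ksub G n r ⊔ π.ker := by rw [hker, sup_comm]
    _ = Subgroup.comap π ((Ksub G n r).map π) := (Subgroup.comap_map_eq π _).symm
    _ = Subgroup.comap π (((⊤ : Subgroup G).nthPowers (n ^ r)).map π) := by rw [h1]
    _ = (⊤ : Subgroup G).nthPowers (n ^ r) ⊔ π.ker := Subgroup.comap_map_eq π _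
    _ = C ⊔ (⊤ : Subgroup G).nthPowers (n ^ r) := by rw [hker, sup_comm]

lemma quotient_comm {G : Type*} [Group G] (H : Subgroup G) [H.Normal]
    (h : commutator G ≤ H) : ∀ a b : G ⧸ H, a * b = b * a := by
  intro a b
  induction a using QuotientGroup.induction_on with | H x =>
  induction b using QuotientGroup.induction_on with | H y =>
  rw [← QuotientGroup.mk_mul, ← QuotientGroup.mk_mul]
  apply (QuotientGroup.eq (s := H)).2
  have hc : (x * y)⁻¹ * (y * x) = ⁅y⁻¹, x⁻¹⁆ := by group
  rw [hc]
  exact h (Subgroup.commutator_mem_commutator (Subgroup.mem_top _) (Subgroup.mem_top _))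

lemma mult_zmod_pow (N : ℕ) (x : Multiplicative (ZMod N)) : x ^ N = 1 := by
  have h : Multiplicative.toAdd (x ^ N) = 0 := by
    rw [toAdd_pow, nsmul_eq_mul, ZMod.natCast_self, zero_mul]
  rw [← ofAdd_toAdd (x ^ N), h]
  rfl

lemma free_quotient_iso (m N : ℕ) [NeZero N] :
    Nonempty ((FreeGroup (Fin m) ⧸
        (commutator (FreeGroup (Fin m)) ⊔ (⊤ : Subgroup (FreeGroup (Fin m))).nthPowers N)) ≃*
      (Fin m → Multiplicative (ZMod N))) := by
  set F := FreeGroup (Fin m)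
  set C := commutator F with hC
  set P := (⊤ : Subgroup F).nthPowers N with hP
  set T := (Fin m → Multiplicative (ZMod N))
  -- the lift homomorphism
  let φ : F →* T := FreeGroup.lift fun i => Pi.mulSingle i (Multiplicative.ofAdd (1 : ZMod N))
  have hTpow : ∀ t : T, t ^ N = 1 := by
    intro t; funext i
    rw [Pi.pow_apply, Pi.one_apply, mult_zmod_pow]
  have hker : C ⊔ P ≤ φ.ker := by
    apply sup_le
    · rw [hC, commutator_def, Subgroup.commutator_le]
      intro g _ h _
      rw [MonoidHom.mem_ker, map_commutatorElement]
      rw [commutatorElement_def, mul_comm (φ g) (φ h)]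
      group
    · apply (Subgroup.closure_le _).2
      rintro x ⟨h, -, rfl⟩
      rw [SetLike.mem_coe, MonoidHom.mem_ker, map_pow, hTpow]
  let φbar : (F ⧸ (C ⊔ P)) →* T := QuotientGroup.lift (C ⊔ P) φ hker
  have qcomm : ∀ a b : F ⧸ (C ⊔ P), a * b = b * a := quotient_comm _ le_sup_left
  -- inverse data
  have hqpow : ∀ i : Fin m, ((QuotientGroup.mk (FreeGroup.of i) : F ⧸ (C ⊔ P))) ^ N = 1 := by
    intro i
    rw [← QuotientGroup.mk_pow]
    rw [QuotientGroup.eq_one_iff]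
    exact Subgroup.mem_sup_right (Subgroup.subset_closure ⟨FreeGroup.of i, trivial, rfl⟩)
  let zf : ∀ _ : Fin m, {f : ℤ →+ Additive (F ⧸ (C ⊔ P)) // f N = 0} := fun i =>
    ⟨zmultiplesHom (Additive (F ⧸ (C ⊔ P)))
        (Additive.ofMul (QuotientGroup.mk (FreeGroup.of i))), by
          rw [zmultiplesHom_apply]
          rw [← ofMul_zpow, zpow_natCast, hqpow i]
          rfl⟩
  let ψi : ∀ _ : Fin m, Multiplicative (ZMod N) →* (F ⧸ (C ⊔ P)) := fun i =>
    AddMonoidHom.toMultiplicativeLeft (ZMod.lift N (zf i))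
  have hψi : ∀ i, ψi i (Multiplicative.ofAdd (1 : ZMod N)) =
      QuotientGroup.mk (FreeGroup.of i) := by
    intro i
    have h1 := congrFun (AddMonoidHom.coe_toMultiplicativeLeft (ZMod.lift N (zf i)))
      (Multiplicative.ofAdd ((1 : ℤ) : ZMod N))
    calc ψi i (Multiplicative.ofAdd (1 : ZMod N))
        = ψi i (Multiplicative.ofAdd ((1 : ℤ) : ZMod N)) := by norm_cast
      _ = Additive.toMul ((ZMod.lift N (zf i)) (Multiplicative.toAdd
            (Multiplicative.ofAdd ((1 : ℤ) : ZMod N)))) := h1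
      _ = QuotientGroup.mk (FreeGroup.of i) := by
            rw [toAdd_ofAdd, ZMod.lift_coe, zmultiplesHom_apply, one_zsmul]
            rfl
  let ψ : T →* (F ⧸ (C ⊔ P)) :=
    MonoidHom.noncommPiCoprod ψi (fun i j _ x y => qcomm _ _)
  -- ψ ∘ φbar = id
  have hcomp : (ψ.comp φbar).comp (QuotientGroup.mk' (C ⊔ P)) = QuotientGroup.mk' (C ⊔ P) := by
    apply FreeGroup.ext_hom
    intro i
    simp only [MonoidHom.comp_apply]
    show ψ (φbar (QuotientGroup.mk (FreeGroup.of i))) = _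
    have : φbar (QuotientGroup.mk (FreeGroup.of i)) = φ (FreeGroup.of i) := rfl
    rw [this, show φ (FreeGroup.of i) = Pi.mulSingle i (Multiplicative.ofAdd (1 : ZMod N)) from
      FreeGroup.lift_apply_of]
    rw [show ψ (Pi.mulSingle i (Multiplicative.ofAdd (1 : ZMod N))) =
      ψi i (Multiplicative.ofAdd (1 : ZMod N)) from MonoidHom.noncommPiCoprod_mulSingle _ _ _]
    rw [hψi i]
    rfl
  have hleft : ∀ q : F ⧸ (C ⊔ P), ψ (φbar q) = q := by
    intro q
    induction q using QuotientGroup.induction_on with | H x =>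
    exact DFunLike.congr_fun hcomp x
  have hinj : Function.Injective φbar := Function.LeftInverse.injective hleft
  have hsurj : Function.Surjective φbar := by
    intro t
    refine ⟨QuotientGroup.mk
      (List.ofFn fun i : Fin m => FreeGroup.of i ^ (Multiplicative.toAdd (t i)).val).prod, ?_⟩
    have hmk : ∀ x : F, φbar (QuotientGroup.mk x) = φ x := fun _ => rfl
    have hone : ∀ i : Fin m, φ (FreeGroup.of i ^ (Multiplicative.toAdd (t i)).val) =
        Pi.mulSingle i (t i) := by
      intro i
      rw [map_pow, FreeGroup.lift_apply_of, ← Pi.mulSingle_pow]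
      rw [← ofAdd_nsmul, nsmul_eq_mul, mul_one]
      rw [ZMod.natCast_rightInverse (Multiplicative.toAdd (t i))]
      simp
    rw [hmk, map_list_prod, List.map_ofFn, List.prod_ofFn]
    calc (∏ i, (φ ∘ fun i : Fin m => FreeGroup.of i ^ (Multiplicative.toAdd (t i)).val) i)
        = ∏ i, Pi.mulSingle i (t i) := Finset.prod_congr rfl fun i _ => hone i
      _ = t := Finset.univ_prod_mulSingle t
  exact ⟨MulEquiv.ofBijective φbar ⟨hinj, hsurj⟩⟩

/-- `[F,F]·K_{r,n} = [F,F]·F^{nʳ}`; consequently the abelianization of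
`Φ_{m,r,n} = F/K_{r,n}` is isomorphic to `(ℤ/nʳℤ)^m`. -/
theorem abelianization_free_solvable_quotient (m r n : ℕ) (hm : 2 ≤ m) (hr : 1 ≤ r)
    (hn : 1 ≤ n) :
    commutator (FreeGroup (Fin m)) ⊔ Ksub (FreeGroup (Fin m)) n r =
      commutator (FreeGroup (Fin m)) ⊔ (⊤ : Subgroup (FreeGroup (Fin m))).nthPowers (n ^ r) ∧
    Nonempty (Abelianization (FreeGroup (Fin m) ⧸ Ksub (FreeGroup (Fin m)) n r) ≃*
      (Fin m → Multiplicative (ZMod (n ^ r)))) := by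
  haveI : NeZero (n ^ r) := ⟨pow_ne_zero r (by omega)⟩
  set F := FreeGroup (Fin m)
  set K := Ksub F n r with hK
  set C := commutator F with hC
  set P := (⊤ : Subgroup F).nthPowers (n ^ r) with hP
  refine ⟨part1 n r, ?_⟩
  -- the commutator subgroup of the quotient is the image of C ⊔ K
  have h2 : commutator (F ⧸ K) = (C ⊔ K).map (QuotientGroup.mk' K) := by
    have hKbot : K.map (QuotientGroup.mk' K) = ⊥ :=
      (Subgroup.map_eq_bot_iff _).2 (by rw [QuotientGroup.ker_mk'])
    rw [Subgroup.map_sup, hKbot, sup_bot_eq, hC, commutator_def, commutator_def,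
      Subgroup.map_commutator,
      Subgroup.map_top_of_surjective _ (QuotientGroup.mk'_surjective K)]
  obtain ⟨e4⟩ := free_quotient_iso m (n ^ r)
  let e1 : ((F ⧸ K) ⧸ commutator (F ⧸ K)) ≃* ((F ⧸ K) ⧸ (C ⊔ K).map (QuotientGroup.mk' K)) :=
    QuotientGroup.quotientMulEquivOfEq h2
  let e2 : ((F ⧸ K) ⧸ (C ⊔ K).map (QuotientGroup.mk' K)) ≃* (F ⧸ (C ⊔ K)) :=
    QuotientGroup.quotientQuotientEquivQuotient K (C ⊔ K) le_sup_right
  let e3 : (F ⧸ (C ⊔ K)) ≃* (F ⧸ (C ⊔ P)) :=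
    QuotientGroup.quotientMulEquivOfEq (part1 n r)
  exact ⟨((e1.trans e2).trans e3).trans e4⟩
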